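/- Let N be a positive integer, (u,v) ∈ (Z/NZ)^2 with gcd(u,v,N)=1, let S be the set of primes dividing both N and u, S̄ the remaining primes dividing N, and let N' be the (additive) order of uv in Z/NZ. Choose n with n ≡ uv mod N_{S̄} and n ≡ −uv mod N_S. Then there exists an integer matrix [[A,B],[C,D]] with AD − BC = N_S N'_S, A ≡ u N'_S mod N_{S̄}, B ≡ v / N_{S̄} mod N_S, and divisibilities N_S N'_S | A, N_S N'_S | D, N N' | C, N_{S̄} N'_{S̄} | B, such that for any g ∈ SL_2(Z) whose bottom row is congruent to (u,v) mod N, one has the equality of cosets Γ_1(N) g = Γ_1(N) · [[0,−1],[N,0]] · [[1, n/N],[0,1]] · [[A,B],[C,D]] · [[N N'_S, 0],[0, N_S]]^{−1}. -/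
import Mathlib

private lemma merel_int_coprime_iff (z : ℤ) (m : ℕ) :
    IsCoprime z (m:ℤ) ↔ Nat.Coprime z.natAbs m := by
  rw [Int.isCoprime_iff_gcd_eq_one]; unfold Int.gcd; rw [Int.natAbs_natCast]

private lemma merel_coprime_of_primes {a b : ℕ}
    (h : ∀ p : ℕ, p.Prime → p ∣ a → p ∣ b → False) : Nat.Coprime a b := by
  by_contra hc
  obtain ⟨p, hp, hpd⟩ := Nat.exists_prime_and_dvd hc
  exact h p hp (hpd.trans (Nat.gcd_dvd_left a b)) (hpd.trans (Nat.gcd_dvd_right a b))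

private lemma merel_not_both {a b : ℕ} (h : Nat.Coprime a b) {p : ℕ} (hp : p.Prime)
    (ha : p ∣ a) (hb : p ∣ b) : False :=
  hp.ne_one (Nat.dvd_one.mp (h ▸ Nat.dvd_gcd ha hb))

theorem merel_coset_representatives
    (N : ℕ) (hN : 0 < N) (u v : ℤ) (hcop : Int.gcd (Int.gcd u v) (N : ℤ) = 1)
    (Ns Nsb : ℕ) (hNfact : Ns * Nsb = N) (hcopS : Nat.Coprime Ns Nsb)
    (hSchar : ∀ p : ℕ, p.Prime → p ∣ N → ((p ∣ Ns) ↔ (p : ℤ) ∣ u))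
    (N' : ℕ) (hN' : N' = addOrderOf ((u * v : ℤ) : ZMod N))
    (N's N'sb : ℕ) (hN'fact : N's * N'sb = N') (hcopS' : Nat.Coprime N's N'sb)
    (hS'char : ∀ p : ℕ, p.Prime → p ∣ N' → ((p ∣ N's) ↔ (p : ℤ) ∣ u))
    (n : ℤ) (hn1 : n ≡ u * v [ZMOD (Nsb : ℤ)]) (hn2 : n ≡ -(u * v) [ZMOD (Ns : ℤ)]) :
    ∃ A B C D : ℤ,
      A * D - B * C = (Ns : ℤ) * (N's : ℤ) ∧
      A ≡ u * (N's : ℤ) [ZMOD (Nsb : ℤ)] ∧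
      (Nsb : ℤ) * B ≡ v [ZMOD (Ns : ℤ)] ∧
      ((Ns : ℤ) * (N's : ℤ)) ∣ A ∧ ((Ns : ℤ) * (N's : ℤ)) ∣ D ∧
      ((N : ℤ) * (N' : ℤ)) ∣ C ∧ ((Nsb : ℤ) * (N'sb : ℤ)) ∣ B ∧
      ∀ g : Matrix.SpecialLinearGroup (Fin 2) ℤ,
        ((g : Matrix (Fin 2) (Fin 2) ℤ) 1 0) ≡ u [ZMOD (N : ℤ)] →
        ((g : Matrix (Fin 2) (Fin 2) ℤ) 1 1) ≡ v [ZMOD (N : ℤ)] →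
        ∃ γ : Matrix (Fin 2) (Fin 2) ℤ,
          γ.det = 1 ∧ (N : ℤ) ∣ γ 1 0 ∧
          γ 0 0 ≡ 1 [ZMOD (N : ℤ)] ∧ γ 1 1 ≡ 1 [ZMOD (N : ℤ)] ∧
          (g : Matrix (Fin 2) (Fin 2) ℤ) * !![(N : ℤ) * (N's : ℤ), 0; 0, (Ns : ℤ)]
            = γ * !![0, -1; (N : ℤ), n] * !![A, B; C, D] := by
  haveI : NeZero N := ⟨hN.ne'⟩
  have hNs0 : Ns ≠ 0 := by rintro rfl; rw [zero_mul] at hNfact; omega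
  have hNsb0 : Nsb ≠ 0 := by rintro rfl; rw [mul_zero] at hNfact; omega
  haveI : NeZero Ns := ⟨hNs0⟩
  haveI : NeZero Nsb := ⟨hNsb0⟩
  have hNZ : (N : ℤ) = (Ns : ℤ) * (Nsb : ℤ) := by exact_mod_cast hNfact.symm
  have hN'Z : (N' : ℤ) = (N's : ℤ) * (N'sb : ℤ) := by exact_mod_cast hN'fact.symm
  have hNsdvd : Ns ∣ N := ⟨Nsb, hNfact.symm⟩
  have hNsbdvd : Nsb ∣ N := ⟨Ns, by rw [← hNfact, Nat.mul_comm]⟩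
  have hN'sdvd : N's ∣ N' := ⟨N'sb, hN'fact.symm⟩
  have hN'sbdvd : N'sb ∣ N' := ⟨N's, by rw [← hN'fact, Nat.mul_comm]⟩
  have hN'dvdN : N' ∣ N := by
    rw [hN']
    refine addOrderOf_dvd_of_nsmul_eq_zero ?_
    rw [nsmul_eq_mul]
    simp [ZMod.natCast_self]
  have hNdvdN'uv : (N : ℤ) ∣ (N' : ℤ) * (u * v) := by
    have h0 : (N' : ZMod N) * ((u * v : ℤ) : ZMod N) = 0 := by
      have h := addOrderOf_nsmul_eq_zero ((u * v : ℤ) : ZMod N)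
      rwa [← hN', nsmul_eq_mul] at h
    have h1 : (((N' : ℤ) * (u * v) : ℤ) : ZMod N) = 0 := by
      push_cast at h0 ⊢; linear_combination h0
    exact (ZMod.intCast_zmod_eq_zero_iff_dvd _ _).mp h1
  have hcop' : Nat.gcd (Int.gcd u v) N = 1 := by
    rw [← Int.gcd_natCast_natCast]; exact hcop
  -- prime facts
  have F1 : Nat.Coprime u.natAbs Nsb := by
    refine merel_coprime_of_primes fun p hp hu hb => ?_
    have hpN : p ∣ N := hb.trans hNsbdvd
    have hpNs : p ∣ Ns := (hSchar p hp hpN).mpr (Int.natCast_dvd.mpr hu)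
    exact merel_not_both hcopS hp hpNs hb
  have F2 : Nat.Coprime v.natAbs Ns := by
    refine merel_coprime_of_primes fun p hp hv hs => ?_
    have hpN : p ∣ N := hs.trans hNsdvd
    have hpu : (p : ℤ) ∣ u := (hSchar p hp hpN).mp hs
    have hdg : p ∣ Nat.gcd (Int.gcd u v) N :=
      Nat.dvd_gcd (Nat.dvd_gcd (Int.natCast_dvd.mp hpu) hv) hpN
    rw [hcop'] at hdg
    exact hp.ne_one (Nat.dvd_one.mp hdg)
  have F3 : Nat.Coprime N's Nsb := by
    refine merel_coprime_of_primes fun p hp hs hb => ?_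
    have hpN' : p ∣ N' := hs.trans hN'sdvd
    have hpu : (p : ℤ) ∣ u := (hS'char p hp hpN').mp hs
    have hpN : p ∣ N := hpN'.trans hN'dvdN
    exact merel_not_both hcopS hp ((hSchar p hp hpN).mpr hpu) hb
  have F4 : Nat.Coprime N'sb Ns := by
    refine merel_coprime_of_primes fun p hp hsb hs => ?_
    have hpN' : p ∣ N' := hsb.trans hN'sbdvd
    have hpN : p ∣ N := hs.trans hNsdvd
    have hpu : (p : ℤ) ∣ u := (hSchar p hp hpN).mp hs
    exact merel_not_both hcopS' hp ((hS'char p hp hpN').mpr hpu) hsb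
  have F5 : ∀ p : ℕ, p.Prime → p ∣ N's → p ∣ Ns := by
    intro p hp hs
    have hpN' : p ∣ N' := hs.trans hN'sdvd
    exact (hSchar p hp (hpN'.trans hN'dvdN)).mpr ((hS'char p hp hpN').mp hs)
  have F6 : ∀ p : ℕ, p.Prime → p ∣ N'sb → p ∣ Nsb := by
    intro p hp hsb
    have hpN' : p ∣ N' := hsb.trans hN'sbdvd
    have hpN : p ∣ N := hpN'.trans hN'dvdN
    have hpu : ¬ (p : ℤ) ∣ u := fun hpu =>
      merel_not_both hcopS' hp ((hS'char p hp hpN').mpr hpu) hsb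
    have hns : ¬ p ∣ Ns := fun h => hpu ((hSchar p hp hpN).mp h)
    rcases (Nat.Prime.dvd_mul hp).mp (hNfact ▸ hpN) with h | h
    · exact absurd h hns
    · exact h
  -- key divisibilities
  have huNs : (Ns : ℤ) ∣ u * (N's : ℤ) := by
    have h1 : (Ns : ℤ) ∣ ((N' : ℤ) * u) * v := by
      refine dvd_trans (Int.natCast_dvd_natCast.mpr hNsdvd) ?_
      have : (N' : ℤ) * (u * v) = ((N' : ℤ) * u) * v := by ring
      rw [← this]; exact hNdvdN'uv
    have h2 : (Ns : ℤ) ∣ (N' : ℤ) * u :=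
      IsCoprime.dvd_of_dvd_mul_right (((merel_int_coprime_iff v Ns).mpr F2).symm) h1
    have h3 : (Ns : ℤ) ∣ ((N's : ℤ) * u) * (N'sb : ℤ) := by
      have : ((N's : ℤ) * u) * (N'sb : ℤ) = (N' : ℤ) * u := by rw [hN'Z]; ring
      rw [this]; exact h2
    have h4 : (Ns : ℤ) ∣ (N's : ℤ) * u :=
      IsCoprime.dvd_of_dvd_mul_right ((Nat.isCoprime_iff_coprime.mpr F4).symm) h3
    rwa [mul_comm] at h4
  have hvNsb : (Nsb : ℤ) ∣ v * (N'sb : ℤ) := by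
    have h1 : (Nsb : ℤ) ∣ ((N' : ℤ) * v) * u := by
      refine dvd_trans (Int.natCast_dvd_natCast.mpr hNsbdvd) ?_
      have : (N' : ℤ) * (u * v) = ((N' : ℤ) * v) * u := by ring
      rw [← this]; exact hNdvdN'uv
    have h2 : (Nsb : ℤ) ∣ (N' : ℤ) * v :=
      IsCoprime.dvd_of_dvd_mul_right (((merel_int_coprime_iff u Nsb).mpr F1).symm) h1
    have h3 : (Nsb : ℤ) ∣ ((N'sb : ℤ) * v) * (N's : ℤ) := by
      have : ((N'sb : ℤ) * v) * (N's : ℤ) = (N' : ℤ) * v := by rw [hN'Z]; ring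
      rw [this]; exact h2
    have h4 : (Nsb : ℤ) ∣ (N'sb : ℤ) * v :=
      IsCoprime.dvd_of_dvd_mul_right ((Nat.isCoprime_iff_coprime.mpr F3).symm) h3
    rwa [mul_comm] at h4
  -- construction of β
  have copNsNsb : IsCoprime (Ns : ℤ) (Nsb : ℤ) := Nat.isCoprime_iff_coprime.mpr hcopS
  have copNsN'sb : IsCoprime (Ns : ℤ) (N'sb : ℤ) :=
    (Nat.isCoprime_iff_coprime.mpr F4).symm
  have copModNs : IsCoprime ((Nsb : ℤ) ^ 2 * (N'sb : ℤ)) (Ns : ℤ) :=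
    IsCoprime.mul_left (copNsNsb.symm.pow_left) (copNsN'sb.symm)
  obtain ⟨x, y, hxy⟩ := id copModNs
  obtain ⟨x2, y2, hxy2⟩ := id copNsNsb
  set β : ℤ := x * v * (y2 * (Nsb : ℤ)) + x2 * (Ns : ℤ) with hβdef
  have hβv : (Ns : ℤ) ∣ ((Nsb : ℤ) ^ 2 * (N'sb : ℤ) * β - v) := by
    refine ⟨x2 * (Nsb : ℤ) ^ 2 * (N'sb : ℤ) - y * v * y2 * (Nsb : ℤ) - v * x2, ?_⟩
    rw [hβdef]; linear_combination (v * y2 * (Nsb : ℤ)) * hxy + v * hxy2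
  have hβ1 : (Nsb : ℤ) ∣ (β - 1) := by
    refine ⟨y2 * (x * v - 1), ?_⟩
    rw [hβdef]; linear_combination hxy2
  have copβNs : IsCoprime β (Ns : ℤ) := by
    obtain ⟨p, q, hpq⟩ := (merel_int_coprime_iff v Ns).mpr F2
    obtain ⟨w, hw⟩ := hβv
    exact ⟨p * (Nsb : ℤ) ^ 2 * (N'sb : ℤ), q - p * w, by linear_combination hpq + p * hw⟩
  -- construction of α
  have copNsbβ : IsCoprime (Nsb : ℤ) β := by
    obtain ⟨k1, hk1⟩ := hβ1
    exact ⟨-k1, 1, by linear_combination hk1⟩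
  obtain ⟨c', d', hc'd'⟩ := id copNsbβ
  have hα0 : (Ns : ℤ) * (x2 * u) - u = (Nsb : ℤ) * (-(y2 * u)) := by
    linear_combination u * hxy2
  set α : ℤ := x2 * u * (d' * β) + c' * (Nsb : ℤ) with hαdef
  have hαu : (Nsb : ℤ) ∣ ((Ns : ℤ) * α - u) := by
    refine ⟨-(u * c') - y2 * u * d' * β + c' * (Ns : ℤ), ?_⟩
    rw [hαdef]; linear_combination (d' * β) * hα0 + u * hc'd'
  have hαβ : β ∣ (α - 1) := by
    refine ⟨x2 * u * d' - d', ?_⟩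
    rw [hαdef]; linear_combination hc'd'
  have cαNsb : IsCoprime α (Nsb : ℤ) := by
    obtain ⟨p2, q2, hpq2⟩ := (merel_int_coprime_iff u Nsb).mpr F1
    obtain ⟨w3, hw3⟩ := hαu
    exact ⟨p2 * (Ns : ℤ), q2 - p2 * w3, by linear_combination hpq2 + p2 * hw3⟩
  -- coprimality for Bezout
  have natβNs : Nat.Coprime β.natAbs Ns := (merel_int_coprime_iff β Ns).mp copβNs
  have cN'sβ : IsCoprime (N's : ℤ) β := by
    refine ((merel_int_coprime_iff β N's).mpr ?_).symm
    exact merel_coprime_of_primes fun p hp hpβ hpN's =>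
      merel_not_both natβNs hp hpβ (F5 p hp hpN's)
  have natαNsb : Nat.Coprime α.natAbs Nsb := (merel_int_coprime_iff α Nsb).mp cαNsb
  have cαN'sb : IsCoprime α (N'sb : ℤ) := by
    refine (merel_int_coprime_iff α N'sb).mpr ?_
    exact merel_coprime_of_primes fun p hp hpα hpN'sb =>
      merel_not_both natαNsb hp hpα (F6 p hp hpN'sb)
  have cαβ : IsCoprime α β := by
    obtain ⟨k2, hk2⟩ := hαβ
    exact ⟨1, -k2, by linear_combination hk2⟩
  have cN'sNsb : IsCoprime (N's : ℤ) (Nsb : ℤ) := Nat.isCoprime_iff_coprime.mpr F3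
  have cN'sN'sb : IsCoprime (N's : ℤ) (N'sb : ℤ) := Nat.isCoprime_iff_coprime.mpr hcopS'
  have copL_Nsb : IsCoprime ((Ns : ℤ) * (N's : ℤ) * α) (Nsb : ℤ) :=
    (copNsNsb.mul_left cN'sNsb).mul_left cαNsb
  have copL_N'sb : IsCoprime ((Ns : ℤ) * (N's : ℤ) * α) (N'sb : ℤ) :=
    (copNsN'sb.mul_left cN'sN'sb).mul_left cαN'sb
  have copL_β : IsCoprime ((Ns : ℤ) * (N's : ℤ) * α) β :=
    ((copβNs.symm).mul_left cN'sβ).mul_left cαβ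
  have copFinal : IsCoprime ((Ns : ℤ) * (N's : ℤ) * α) (((Nsb : ℤ) * (N'sb : ℤ)) ^ 2 * β) :=
    ((copL_Nsb.mul_right copL_N'sb).pow_right).mul_right copL_β
  obtain ⟨δ, f, hef⟩ := copFinal
  set γ0 : ℤ := -f with hγ0def
  have hbez : (Ns : ℤ) * (N's : ℤ) * α * δ - ((Nsb : ℤ) * (N'sb : ℤ)) ^ 2 * β * γ0 = 1 := by
    rw [hγ0def]; linear_combination hef
  clear hef hγ0def hβdef hαdef
  -- ZMod facts mod Ns
  have zNs : ((Ns : ℕ) : ZMod Ns) = 0 := ZMod.natCast_self Ns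
  have zβv : ((Nsb : ZMod Ns)) ^ 2 * (N'sb : ZMod Ns) * ((β : ZMod Ns)) - ((v : ZMod Ns)) = 0 := by
    have h := (ZMod.intCast_zmod_eq_zero_iff_dvd _ Ns).mpr hβv
    push_cast at h; exact h
  have zuNs : (u : ZMod Ns) * (N's : ZMod Ns) = 0 := by
    have h := (ZMod.intCast_zmod_eq_zero_iff_dvd _ Ns).mpr huNs
    push_cast at h; linear_combination h
  have zbezNs : (Ns : ZMod Ns) * (N's : ZMod Ns) * (α : ZMod Ns) * (δ : ZMod Ns)
      - ((Nsb : ZMod Ns) * (N'sb : ZMod Ns)) ^ 2 * (β : ZMod Ns) * (γ0 : ZMod Ns) = 1 := by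
    have h := congrArg (fun t : ℤ => (t : ZMod Ns)) hbez
    push_cast at h; linear_combination h
  have zn2 : (n : ZMod Ns) = -((u : ZMod Ns) * (v : ZMod Ns)) := by
    have h := (ZMod.intCast_eq_intCast_iff _ _ _).mpr hn2
    push_cast at h; linear_combination h
  -- ZMod facts mod Nsb
  have zNsb : ((Nsb : ℕ) : ZMod Nsb) = 0 := ZMod.natCast_self Nsb
  have zαu : (Ns : ZMod Nsb) * (α : ZMod Nsb) - (u : ZMod Nsb) = 0 := by
    have h := (ZMod.intCast_zmod_eq_zero_iff_dvd _ Nsb).mpr hαu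
    push_cast at h; linear_combination h
  have zvN'sb : (v : ZMod Nsb) * (N'sb : ZMod Nsb) = 0 := by
    have h := (ZMod.intCast_zmod_eq_zero_iff_dvd _ Nsb).mpr hvNsb
    push_cast at h; linear_combination h
  have zbezNsb : (Ns : ZMod Nsb) * (N's : ZMod Nsb) * (α : ZMod Nsb) * (δ : ZMod Nsb)
      - ((Nsb : ZMod Nsb) * (N'sb : ZMod Nsb)) ^ 2 * (β : ZMod Nsb) * (γ0 : ZMod Nsb) = 1 := by
    have h := congrArg (fun t : ℤ => (t : ZMod Nsb)) hbez
    push_cast at h; linear_combination h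
  have zn1 : (n : ZMod Nsb) = (u : ZMod Nsb) * (v : ZMod Nsb) := by
    have h := (ZMod.intCast_eq_intCast_iff _ _ _).mpr hn1
    push_cast at h; linear_combination h
  refine ⟨(Ns : ℤ) * (N's : ℤ) * α, (Nsb : ℤ) * (N'sb : ℤ) * β, (N : ℤ) * (N' : ℤ) * γ0,
    (Ns : ℤ) * (N's : ℤ) * δ, ?_, ?_, ?_, ⟨α, by ring⟩, ⟨δ, by ring⟩, ⟨γ0, by ring⟩,
    ⟨β, by ring⟩, ?_⟩
  · -- determinant
    linear_combination ((Ns : ℤ) * (N's : ℤ)) * hbez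
      - ((Nsb : ℤ) * (N'sb : ℤ) * β * γ0 * (N' : ℤ)) * hNZ
      - ((Nsb : ℤ) * (N'sb : ℤ) * β * γ0 * (Ns : ℤ) * (Nsb : ℤ)) * hN'Z
  · -- A ≡ u * N's mod Nsb
    rw [Int.modEq_iff_dvd]
    obtain ⟨w3, hw3⟩ := hαu
    exact ⟨-((N's : ℤ) * w3), by linear_combination (-(N's : ℤ)) * hw3⟩
  · -- Nsb * B ≡ v mod Ns
    rw [Int.modEq_iff_dvd]
    obtain ⟨w4, hw4⟩ := hβv
    exact ⟨-w4, by linear_combination -hw4⟩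
  · -- per-g statement
    intro g hgc hgd
    obtain ⟨ga, gb, gc2, gd2, hmeta⟩ :
        ∃ a b c d, (g : Matrix (Fin 2) (Fin 2) ℤ) = !![a, b; c, d] :=
      ⟨_, _, _, _, Matrix.eta_fin_two _⟩
    have hgc' : gc2 ≡ u [ZMOD (N : ℤ)] := by rw [hmeta] at hgc; simpa using hgc
    have hgd' : gd2 ≡ v [ZMOD (N : ℤ)] := by rw [hmeta] at hgd; simpa using hgd
    have hdetg : ga * gd2 - gb * gc2 = 1 := by
      have hp := g.property
      rw [hmeta, Matrix.det_fin_two_of] at hp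
      exact hp
    -- mod-Ns and mod-Nsb versions of bottom-row congruences
    have zc : (gc2 : ZMod Ns) = (u : ZMod Ns) :=
      (ZMod.intCast_eq_intCast_iff _ _ _).mpr
        (hgc'.of_dvd (Int.natCast_dvd_natCast.mpr hNsdvd))
    have zd : (gd2 : ZMod Ns) = (v : ZMod Ns) :=
      (ZMod.intCast_eq_intCast_iff _ _ _).mpr
        (hgd'.of_dvd (Int.natCast_dvd_natCast.mpr hNsdvd))
    have zc' : (gc2 : ZMod Nsb) = (u : ZMod Nsb) :=
      (ZMod.intCast_eq_intCast_iff _ _ _).mpr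
        (hgc'.of_dvd (Int.natCast_dvd_natCast.mpr hNsbdvd))
    have zd' : (gd2 : ZMod Nsb) = (v : ZMod Nsb) :=
      (ZMod.intCast_eq_intCast_iff _ _ _).mpr
        (hgd'.of_dvd (Int.natCast_dvd_natCast.mpr hNsbdvd))
    set e11 : ℤ := gc2 * (N's : ℤ) * δ - gd2 * (N'sb : ℤ) * γ0 with he11
    set e01 : ℤ := ga * (N's : ℤ) * δ - gb * (N'sb : ℤ) * γ0 with he01
    set e10 : ℤ := n * e11 + gc2 * (Nsb : ℤ) ^ 2 * (N'sb : ℤ) * β - gd2 * (Ns : ℤ) * α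
      with he10
    set e00 : ℤ := n * e01 + ga * (Nsb : ℤ) ^ 2 * (N'sb : ℤ) * β - gb * (Ns : ℤ) * α
      with he00
    have hdete : e00 * e11 - e01 * e10 = 1 := by
      rw [he00, he01, he10, he11]
      linear_combination ((Ns : ℤ) * (N's : ℤ) * α * δ
        - ((Nsb : ℤ) * (N'sb : ℤ)) ^ 2 * β * γ0) * hdetg + hbez
    have h11s : (Ns : ℤ) ∣ (e11 - 1) := by
      rw [he11, ← ZMod.intCast_zmod_eq_zero_iff_dvd]
      push_cast
      linear_combination ((N's : ZMod Ns) * (δ : ZMod Ns)) * zc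
        - ((N'sb : ZMod Ns) * (γ0 : ZMod Ns)) * zd
        + (δ : ZMod Ns) * zuNs
        + ((N'sb : ZMod Ns) * (γ0 : ZMod Ns)) * zβv
        + zbezNs
        - ((N's : ZMod Ns) * (α : ZMod Ns) * (δ : ZMod Ns)) * zNs
    have h11b : (Nsb : ℤ) ∣ (e11 - 1) := by
      rw [he11, ← ZMod.intCast_zmod_eq_zero_iff_dvd]
      push_cast
      linear_combination ((N's : ZMod Nsb) * (δ : ZMod Nsb)) * zc'
        - ((N's : ZMod Nsb) * (δ : ZMod Nsb)) * zαu
        + zbezNsb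
        + ((Nsb : ZMod Nsb) * (N'sb : ZMod Nsb) ^ 2 * (β : ZMod Nsb) * (γ0 : ZMod Nsb)) * zNsb
        - ((N'sb : ZMod Nsb) * (γ0 : ZMod Nsb)) * zd'
        - (γ0 : ZMod Nsb) * zvN'sb
    have h11 : (N : ℤ) ∣ (e11 - 1) := by
      rw [hNZ]; exact copNsNsb.mul_dvd h11s h11b
    have h10auxs : (Ns : ℤ) ∣ (n + gc2 * (Nsb : ℤ) ^ 2 * (N'sb : ℤ) * β - gd2 * (Ns : ℤ) * α) := by
      rw [← ZMod.intCast_zmod_eq_zero_iff_dvd]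
      push_cast
      linear_combination zn2
        + ((Nsb : ZMod Ns) ^ 2 * (N'sb : ZMod Ns) * (β : ZMod Ns)) * zc
        + (u : ZMod Ns) * zβv
        - ((gd2 : ZMod Ns) * (α : ZMod Ns)) * zNs
    have h10auxb : (Nsb : ℤ) ∣ (n + gc2 * (Nsb : ℤ) ^ 2 * (N'sb : ℤ) * β - gd2 * (Ns : ℤ) * α) := by
      rw [← ZMod.intCast_zmod_eq_zero_iff_dvd]
      push_cast
      linear_combination zn1
        + ((gc2 : ZMod Nsb) * (Nsb : ZMod Nsb) * (N'sb : ZMod Nsb) * (β : ZMod Nsb)) * zNsb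
        - ((Ns : ZMod Nsb) * (α : ZMod Nsb)) * zd'
        - (v : ZMod Nsb) * zαu
    have h10aux : (N : ℤ) ∣ (n + gc2 * (Nsb : ℤ) ^ 2 * (N'sb : ℤ) * β - gd2 * (Ns : ℤ) * α) := by
      rw [hNZ]; exact copNsNsb.mul_dvd h10auxs h10auxb
    have h10 : (N : ℤ) ∣ e10 := by
      have hsplit : e10 = n * (e11 - 1)
          + (n + gc2 * (Nsb : ℤ) ^ 2 * (N'sb : ℤ) * β - gd2 * (Ns : ℤ) * α) := by
        rw [he10]; ring
      rw [hsplit]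
      exact dvd_add (Dvd.dvd.mul_left h11 n) h10aux
    have h00 : (N : ℤ) ∣ (e00 - 1) := by
      have key : e00 - 1 = e01 * e10 - e00 * (e11 - 1) := by linear_combination hdete
      rw [key]
      exact dvd_sub (Dvd.dvd.mul_left h10 e01) (Dvd.dvd.mul_left h11 e00)
    refine ⟨!![e00, e01; e10, e11], ?_, ?_, ?_, ?_, ?_⟩
    · rw [Matrix.det_fin_two_of]; exact hdete
    · have hent : (!![e00, e01; e10, e11] : Matrix (Fin 2) (Fin 2) ℤ) 1 0 = e10 := by
        norm_num
      rw [hent]; exact h10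
    · have hent : (!![e00, e01; e10, e11] : Matrix (Fin 2) (Fin 2) ℤ) 0 0 = e00 := by
        norm_num
      rw [hent, Int.modEq_iff_dvd]
      have : (1 : ℤ) - e00 = -(e00 - 1) := by ring
      rw [this]; exact dvd_neg.mpr h00
    · have hent : (!![e00, e01; e10, e11] : Matrix (Fin 2) (Fin 2) ℤ) 1 1 = e11 := by
        norm_num
      rw [hent, Int.modEq_iff_dvd]
      have : (1 : ℤ) - e11 = -(e11 - 1) := by ring
      rw [this]; exact dvd_neg.mpr h11
    · rw [hmeta, he00, he01, he10, he11]
      ext i j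
      fin_cases i <;> fin_cases j <;>
        simp [Matrix.mul_apply, Fin.sum_univ_two]
      · linear_combination (-(N : ℤ) * ga * (N's : ℤ)) * hbez
          + ((N : ℤ) * (ga * γ0 * (Nsb : ℤ) ^ 2 * (N'sb : ℤ) * β
              - gb * (Ns : ℤ) * α * γ0)) * hN'Z
      · linear_combination (-gb * (Ns : ℤ)) * hbez
          + (-ga * (N's : ℤ) * δ * (N'sb : ℤ) * β * (Nsb : ℤ)
              + gb * (N'sb : ℤ) ^ 2 * (Nsb : ℤ) * β * γ0) * hNZ
      · linear_combination (-(N : ℤ) * gc2 * (N's : ℤ)) * hbez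
          + ((N : ℤ) * (gc2 * γ0 * (Nsb : ℤ) ^ 2 * (N'sb : ℤ) * β
              - gd2 * (Ns : ℤ) * α * γ0)) * hN'Z
      · linear_combination (-gd2 * (Ns : ℤ)) * hbez
          + (-gc2 * (N's : ℤ) * δ * (N'sb : ℤ) * β * (Nsb : ℤ)
              + gd2 * (N'sb : ℤ) ^ 2 * (Nsb : ℤ) * β * γ0) * hNZ
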